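/- Let β, ω ∈ ℝ, let Q : ℝ → ℝ be twice continuously differentiable with Q(s) > 0 for all s, and fix t ∈ ℝ. Then the scaled discrete Smorodinsky–Winternitz equation converges to the continuous Smorodinsky–Winternitz equation: the limit as h → 0⁺ of (1/h³)·[ h·Q(t+h)·√(1 − h⁶β/(h⁴·Q(t)²·Q(t+h)²)) + h·Q(t−h)·√(1 − h⁶β/(h⁴·Q(t)²·Q(t−h)²)) − (2 − h²·ω²)·h·Q(t) ] equals Q''(t) + ω²·Q(t) − β/Q(t)³. -/

import Mathlib

open Filter Set Real

lemma sqrt_one_sub_eq (x : ℝ) (hx : x ≤ 1) :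
    Real.sqrt (1 - x) = 1 - x / (Real.sqrt (1 - x) + 1) := by
  have h0 : (0:ℝ) ≤ 1 - x := by linarith
  have hs := Real.sq_sqrt h0
  have hpos : 0 < Real.sqrt (1 - x) + 1 := by positivity
  field_simp
  nlinarith [hs]

lemma alg_id (h qt a b ω β sp sm : ℝ) (hh : h ≠ 0) (hqt : qt ≠ 0) (ha : a ≠ 0) (hb : b ≠ 0)
    (hsp : sp + 1 ≠ 0) (hsm : sm + 1 ≠ 0)
    (hspe : sp = 1 - h ^ 2 * β / (qt ^ 2 * a ^ 2) / (sp + 1))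
    (hsme : sm = 1 - h ^ 2 * β / (qt ^ 2 * b ^ 2) / (sm + 1)) :
    (1 / h ^ 3) * (h * a * sp + h * b * sm - (2 - h ^ 2 * ω ^ 2) * (h * qt))
      = (a + b - 2 * qt) / h ^ 2 + ω ^ 2 * qt
        + (-(β / (qt ^ 2 * a * (sp + 1))) + -(β / (qt ^ 2 * b * (sm + 1)))) := by
  have e1 : h * a * sp = h * a - h ^ 3 * (β / (qt ^ 2 * a * (sp + 1))) := by
    conv_lhs => rw [hspe]
    field_simp
  have e2 : h * b * sm = h * b - h ^ 3 * (β / (qt ^ 2 * b * (sm + 1))) := by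
    conv_lhs => rw [hsme]
    field_simp
  rw [e1, e2]
  field_simp
  ring

lemma symm_second {Q : ℝ → ℝ} (hQ : ContDiff ℝ 2 Q) (t : ℝ) :
    Tendsto (fun h => (Q (t + h) + Q (t - h) - 2 * Q t) / h ^ 2)
      (nhdsWithin 0 (Set.Ioi 0)) (nhds (deriv (deriv Q) t)) := by
  have hQ2 : ContDiff ℝ (1 + 1) Q := by exact_mod_cast hQ
  have hQ1 : Differentiable ℝ Q := (contDiff_succ_iff_deriv.mp hQ2).1
  have hQ' : ContDiff ℝ 1 (deriv Q) := (contDiff_succ_iff_deriv.mp hQ2).2.2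
  have hQ'd : Differentiable ℝ (deriv Q) := (contDiff_one_iff_deriv.mp hQ').1
  have hcont : Continuous (deriv (deriv Q)) := (contDiff_one_iff_deriv.mp hQ').2
  have key : ∀ h : ℝ, 0 < h → ∃ d : ℝ, |d - t| < h ∧
      (Q (t + h) + Q (t - h) - 2 * Q t) / h ^ 2 = deriv (deriv Q) d := by
    intro h hh
    set F : ℝ → ℝ := fun x => Q (t + x) + Q (t - x) - 2 * Q t with hF
    set F' : ℝ → ℝ := fun x => deriv Q (t + x) - deriv Q (t - x) with hF'
    have hFd : ∀ x : ℝ, HasDerivAt F (F' x) x := by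
      intro x
      have h1 : HasDerivAt (fun x : ℝ => Q (t + x)) (deriv Q (t + x) * 1) x :=
        (hQ1 (t + x)).hasDerivAt.comp x ((hasDerivAt_id x).const_add t)
      have h2 : HasDerivAt (fun x : ℝ => Q (t - x)) (deriv Q (t - x) * (-1)) x :=
        (hQ1 (t - x)).hasDerivAt.comp x ((hasDerivAt_id x).neg.const_add t)
      have := (h1.add h2).sub_const (2 * Q t)
      refine this.congr_deriv ?_
      show _ = deriv Q (t + x) - deriv Q (t - x); ring
    obtain ⟨c, hc, hceq⟩ := exists_ratio_hasDerivAt_eq_ratio_slope F F' hh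
      (fun x _ => (hFd x).continuousAt.continuousWithinAt)
      (fun x _ => hFd x) (fun x => x ^ 2) (fun x => 2 * x)
      (by fun_prop) (fun x _ => by simpa using (hasDerivAt_pow 2 x))
    have hc0 : 0 < c := hc.1
    have hcb : c < h := hc.2
    obtain ⟨d, hd, hdeq⟩ := exists_hasDerivAt_eq_slope (deriv Q) (deriv (deriv Q))
      (show t - c < t + c by linarith)
      (hQ'd.continuous.continuousOn)
      (fun x _ => (hQ'd x).hasDerivAt)
    refine ⟨d, ?_, ?_⟩
    · rw [abs_sub_lt_iff]
      rcases hd with ⟨hd1, hd2⟩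
      constructor <;> linarith
    · have hF0 : F 0 = 0 := by simp [F]; ring
      have hFh : F h = Q (t + h) + Q (t - h) - 2 * Q t := rfl
      have hF'c : F' c = deriv Q (t + c) - deriv Q (t - c) := rfl
      have htc : t + c - (t - c) = 2 * c := by ring
      rw [htc] at hdeq
      have hc2 : (2 : ℝ) * c ≠ 0 := by positivity
      have hh2 : h ^ 2 ≠ 0 := by positivity
      rw [hF0, hFh, hF'c] at hceq
      rw [hdeq]
      field_simp at hceq ⊢
      nlinarith [hceq]
  rw [Metric.tendsto_nhdsWithin_nhds]
  intro ε hε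
  obtain ⟨δ, hδ, hδ'⟩ := Metric.continuousAt_iff.mp (hcont.continuousAt (x := t)) ε hε
  refine ⟨δ, hδ, fun {h} hh hhd => ?_⟩
  obtain ⟨d, hd1, hd2⟩ := key h hh
  rw [hd2]
  apply hδ'
  rw [Real.dist_eq]
  calc |d - t| < h := hd1
    _ = |h - 0| := by rw [sub_zero, abs_of_pos hh]
    _ < δ := by simpa [Real.dist_eq] using hhd

theorem dSW_continuum_limit (β ω : ℝ) (Q : ℝ → ℝ) (hQ : ContDiff ℝ 2 Q)
    (hQpos : ∀ s, 0 < Q s) (t : ℝ) :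
    Filter.Tendsto (fun h : ℝ =>
      (1 / h ^ 3) *
        (h * Q (t + h) * Real.sqrt (1 - h ^ 6 * β / (h ^ 4 * (Q t) ^ 2 * (Q (t + h)) ^ 2))
          + h * Q (t - h) * Real.sqrt (1 - h ^ 6 * β / (h ^ 4 * (Q t) ^ 2 * (Q (t - h)) ^ 2))
          - (2 - h ^ 2 * ω ^ 2) * (h * Q t)))
      (nhdsWithin 0 (Set.Ioi 0))
      (nhds (deriv (deriv Q) t + ω ^ 2 * Q t - β / (Q t) ^ 3)) := by
  have hQc : Continuous Q := hQ.continuous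
  have hQt : 0 < Q t := hQpos t
  set G : ℝ → ℝ := fun h =>
    (Q (t + h) + Q (t - h) - 2 * Q t) / h ^ 2 + ω ^ 2 * Q t
      + (-(β / ((Q t) ^ 2 * Q (t + h) * (Real.sqrt (1 - h ^ 2 * β / ((Q t) ^ 2 * (Q (t + h)) ^ 2)) + 1)))
        + -(β / ((Q t) ^ 2 * Q (t - h) * (Real.sqrt (1 - h ^ 2 * β / ((Q t) ^ 2 * (Q (t - h)) ^ 2)) + 1))))
    with hG
  have hA := symm_second hQ t
  have hBp : Tendsto (fun h : ℝ =>
      -(β / ((Q t) ^ 2 * Q (t + h) * (Real.sqrt (1 - h ^ 2 * β / ((Q t) ^ 2 * (Q (t + h)) ^ 2)) + 1))))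
      (nhdsWithin 0 (Set.Ioi 0)) (nhds (-(β / (2 * (Q t) ^ 3)))) := by
    have hct : ContinuousAt (fun h : ℝ =>
        -(β / ((Q t) ^ 2 * Q (t + h) * (Real.sqrt (1 - h ^ 2 * β / ((Q t) ^ 2 * (Q (t + h)) ^ 2)) + 1)))) 0 := by
      apply ContinuousAt.neg
      apply ContinuousAt.div continuousAt_const
      · apply ContinuousAt.mul
        apply ContinuousAt.mul continuousAt_const
        · exact (hQc.continuousAt).comp (by fun_prop)
        · apply ContinuousAt.add _ continuousAt_const
          apply Real.continuous_sqrt.continuousAt.comp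
          apply ContinuousAt.sub continuousAt_const
          apply ContinuousAt.div (by fun_prop)
          · apply ContinuousAt.mul continuousAt_const
            exact (ContinuousAt.pow ((hQc.continuousAt).comp (by fun_prop)) 2)
          · have h1 : 0 < Q (t + 0) := hQpos _
            positivity
      · have h1 : 0 < Q (t + 0) := hQpos _
        have h2 : (0:ℝ) ≤ Real.sqrt (1 - 0 ^ 2 * β / ((Q t) ^ 2 * (Q (t + 0)) ^ 2)) :=
          Real.sqrt_nonneg _
        positivity
    have h0 := (hct.continuousWithinAt (s := Set.Ioi 0)).tendsto
    norm_num [Real.sqrt_one] at h0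
    convert h0.neg using 2
    ring
  have hBm : Tendsto (fun h : ℝ =>
      -(β / ((Q t) ^ 2 * Q (t - h) * (Real.sqrt (1 - h ^ 2 * β / ((Q t) ^ 2 * (Q (t - h)) ^ 2)) + 1))))
      (nhdsWithin 0 (Set.Ioi 0)) (nhds (-(β / (2 * (Q t) ^ 3)))) := by
    have hct : ContinuousAt (fun h : ℝ =>
        -(β / ((Q t) ^ 2 * Q (t - h) * (Real.sqrt (1 - h ^ 2 * β / ((Q t) ^ 2 * (Q (t - h)) ^ 2)) + 1)))) 0 := by
      apply ContinuousAt.neg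
      apply ContinuousAt.div continuousAt_const
      · apply ContinuousAt.mul
        apply ContinuousAt.mul continuousAt_const
        · exact (hQc.continuousAt).comp (by fun_prop)
        · apply ContinuousAt.add _ continuousAt_const
          apply Real.continuous_sqrt.continuousAt.comp
          apply ContinuousAt.sub continuousAt_const
          apply ContinuousAt.div (by fun_prop)
          · apply ContinuousAt.mul continuousAt_const
            exact (ContinuousAt.pow ((hQc.continuousAt).comp (by fun_prop)) 2)
          · have h1 : 0 < Q (t - 0) := hQpos _
            positivity
      · have h1 : 0 < Q (t - 0) := hQpos _
        have h2 : (0:ℝ) ≤ Real.sqrt (1 - 0 ^ 2 * β / ((Q t) ^ 2 * (Q (t - 0)) ^ 2)) :=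
          Real.sqrt_nonneg _
        positivity
    have h0 := (hct.continuousWithinAt (s := Set.Ioi 0)).tendsto
    norm_num [Real.sqrt_one] at h0
    convert h0.neg using 2
    ring
  have hGlim : Tendsto G (nhdsWithin 0 (Set.Ioi 0))
      (nhds (deriv (deriv Q) t + ω ^ 2 * Q t - β / (Q t) ^ 3)) := by
    have hcc : Tendsto (fun _ : ℝ => ω ^ 2 * Q t) (nhdsWithin 0 (Set.Ioi 0))
        (nhds (ω ^ 2 * Q t)) := tendsto_const_nhds
    have hsum := (hA.add hcc).add (hBp.add hBm)
    have hval : deriv (deriv Q) t + ω ^ 2 * Q t - β / (Q t) ^ 3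
        = deriv (deriv Q) t + ω ^ 2 * Q t + (-(β / (2 * (Q t) ^ 3)) + -(β / (2 * (Q t) ^ 3))) := by
      have : (Q t) ≠ 0 := hQt.ne'
      field_simp
      ring
    rw [hval]
    exact hsum
  -- eventual equality
  have hev : ∀ᶠ h in nhdsWithin 0 (Set.Ioi 0),
      (1 / h ^ 3) *
        (h * Q (t + h) * Real.sqrt (1 - h ^ 6 * β / (h ^ 4 * (Q t) ^ 2 * (Q (t + h)) ^ 2))
          + h * Q (t - h) * Real.sqrt (1 - h ^ 6 * β / (h ^ 4 * (Q t) ^ 2 * (Q (t - h)) ^ 2))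
          - (2 - h ^ 2 * ω ^ 2) * (h * Q t)) = G h := by
    have hxp : Tendsto (fun h : ℝ => h ^ 2 * β / ((Q t) ^ 2 * (Q (t + h)) ^ 2))
        (nhdsWithin 0 (Set.Ioi 0)) (nhds 0) := by
      have hct : ContinuousAt (fun h : ℝ => h ^ 2 * β / ((Q t) ^ 2 * (Q (t + h)) ^ 2)) 0 := by
        apply ContinuousAt.div (by fun_prop)
        · apply ContinuousAt.mul continuousAt_const
          exact (ContinuousAt.pow ((hQc.continuousAt).comp (by fun_prop)) 2)
        · have h1 : 0 < Q (t + 0) := hQpos _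
          positivity
      have h0 := (hct.continuousWithinAt (s := Set.Ioi 0)).tendsto
      simpa using h0
    have hxm : Tendsto (fun h : ℝ => h ^ 2 * β / ((Q t) ^ 2 * (Q (t - h)) ^ 2))
        (nhdsWithin 0 (Set.Ioi 0)) (nhds 0) := by
      have hct : ContinuousAt (fun h : ℝ => h ^ 2 * β / ((Q t) ^ 2 * (Q (t - h)) ^ 2)) 0 := by
        apply ContinuousAt.div (by fun_prop)
        · apply ContinuousAt.mul continuousAt_const
          exact (ContinuousAt.pow ((hQc.continuousAt).comp (by fun_prop)) 2)
        · have h1 : 0 < Q (t - 0) := hQpos _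
          positivity
      have h0 := (hct.continuousWithinAt (s := Set.Ioi 0)).tendsto
      simpa using h0
    have h1 := hxp.eventually (eventually_le_nhds (show (0:ℝ) < 1 by norm_num))
    have h2 := hxm.eventually (eventually_le_nhds (show (0:ℝ) < 1 by norm_num))
    filter_upwards [h1, h2, self_mem_nhdsWithin] with h hle1 hle2 hmem
    have hh : 0 < h := hmem
    have hhne : h ≠ 0 := ne_of_gt hh
    have hQp : 0 < Q (t + h) := hQpos _
    have hQm : 0 < Q (t - h) := hQpos _
    have e1 : 1 - h ^ 6 * β / (h ^ 4 * (Q t) ^ 2 * (Q (t + h)) ^ 2)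
        = 1 - h ^ 2 * β / ((Q t) ^ 2 * (Q (t + h)) ^ 2) := by
      rw [sub_right_inj]
      field_simp
    have e2 : 1 - h ^ 6 * β / (h ^ 4 * (Q t) ^ 2 * (Q (t - h)) ^ 2)
        = 1 - h ^ 2 * β / ((Q t) ^ 2 * (Q (t - h)) ^ 2) := by
      rw [sub_right_inj]
      field_simp
    rw [e1, e2]
    simp only [hG]
    have hsp := sqrt_one_sub_eq (h ^ 2 * β / ((Q t) ^ 2 * (Q (t + h)) ^ 2)) hle1
    have hsm := sqrt_one_sub_eq (h ^ 2 * β / ((Q t) ^ 2 * (Q (t - h)) ^ 2)) hle2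
    have hsp1 : Real.sqrt (1 - h ^ 2 * β / ((Q t) ^ 2 * (Q (t + h)) ^ 2)) + 1 ≠ 0 := by
      have := Real.sqrt_nonneg (1 - h ^ 2 * β / ((Q t) ^ 2 * (Q (t + h)) ^ 2)); positivity
    have hsm1 : Real.sqrt (1 - h ^ 2 * β / ((Q t) ^ 2 * (Q (t - h)) ^ 2)) + 1 ≠ 0 := by
      have := Real.sqrt_nonneg (1 - h ^ 2 * β / ((Q t) ^ 2 * (Q (t - h)) ^ 2)); positivity
    exact alg_id h (Q t) (Q (t + h)) (Q (t - h)) ω β _ _ hhne hQt.ne' hQp.ne' hQm.ne'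
      hsp1 hsm1 hsp hsm
  exact hGlim.congr' (hev.mono fun h e => e.symm)
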